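/- Let N ≥ 1, let p_1,…,p_N, p̄_1,…,p̄_N, q_1,…,q_N, q̄_1,…,q̄_N ∈ ℂ be nonzero with p_i + p̄_j ≠ 0 and q_i + q̄_j ≠ 0 for all i,j, let μ, ν, ξ_{i0}, ξ̄_{j0}, η_{i0}, η̄_{j0} ∈ ℂ, let a₁, a₂ ∈ ℝ be nonzero with 1 − a₁ p_i ≠ 0, 1 + a₁ p̄_j ≠ 0, 1 − a₂ q_i ≠ 0, 1 + a₂ q̄_j ≠ 0 for all i,j, and let x₋₁, y₋₁ ∈ ℝ. Set ξ_i = x₋₁/p_i + ξ_{i0}, ξ̄_j = x₋₁/p̄_j + ξ̄_{j0}, η_i = y₋₁/q_i + η_{i0}, η̄_j = y₋₁/q̄_j + η̄_{j0}. For n, k₁, m, k₂ ∈ ℤ define: A(n,k₁) the N×N matrix with entry (μ p̄_j/(p_i+p̄_j))·(−p_i/p̄_j)^n·((1−a₁p_i)/(1+a₁p̄_j))^{−k₁}·exp(ξ_i+ξ̄_j); Ã(n,k₁) with entry (−μ p_i/(p_i+p̄_j))·(−p_i/p̄_j)^n·((1−a₁p_i)/(1+a₁p̄_j))^{−k₁}·exp(ξ_i+ξ̄_j);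 B(m,k₂) with entry (ν/(q_i+q̄_j))·(−q_i/q̄_j)^m·((1−a₂q_i)/(1+a₂q̄_j))^{−k₂}·exp(η_i+η̄_j); row vectors Φ(n,k₁) with j-th entry p_j^n (1−a₁p_j)^{−k₁} exp(ξ_j), Φ̄(n,k₁) with j-th entry (−p̄_j)^{−n}(1+a₁p̄_j)^{k₁} exp(ξ̄_j), Ψ(m,k₂) with j-th entry q_j^m (1−a₂q_j)^{−k₂} exp(η_j), Ψ̄(m,k₂) with j-th entry (−q̄_j)^{−m}(1+a₂q̄_j)^{k₂} exp(η̄_j). Set f^{m,k₂}_{n,k₁} = det[[A(n,k₁), I],[−I, B(m,k₂)]], g^{m,k₂}_{n,k₁} = det[[A(n,k₁), I, Φ(n,k₁)ᵀ],[−I, B(m,k₂), 0],[0, −Ψ̄(m,k₂), 0]], and ḡ^{m,k₂}_{n,k₁} = det[[Ã(n,k₁), I, 0],[−I, B(m,k₂), Ψ(m,k₂)ᵀ],[−Φ̄(n,k₁), 0, 0]]. Then for all n, k₁, m, k₂ ∈ ℤ: (1/a₂)·(f^{m,k₂+1}_{n+1,k₁}·f^{m,k₂}_{n,k₁} − f^{m,k₂}_{n+1,k₁}·f^{m,k₂+1}_{n,k₁})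 = μ·ν·g^{m,k₂}_{n,k₁}·ḡ^{m,k₂+1}_{n,k₁}. -/

import Mathlib

open Matrix

/-- Determinant of the 2N×2N block matrix `[[A, I], [−I, B]]`. -/
noncomputable def blockDet {N : ℕ} (A B : Matrix (Fin N) (Fin N) ℂ) : ℂ :=
  (Matrix.fromBlocks A (1 : Matrix (Fin N) (Fin N) ℂ)
    (-1 : Matrix (Fin N) (Fin N) ℂ) B).det

/-- Determinant of the bordered (2N+1)×(2N+1) matrix obtained from the block matrix
`[[A, I], [−I, B]]` by appending the column vector `col` on the right and the row
vector `row` at the bottom, with `0` in the corner. -/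
noncomputable def borderedDet {N : ℕ} (A B : Matrix (Fin N) (Fin N) ℂ)
    (col row : (Fin N ⊕ Fin N) → ℂ) : ℂ :=
  (Matrix.fromBlocks
    (Matrix.fromBlocks A (1 : Matrix (Fin N) (Fin N) ℂ)
      (-1 : Matrix (Fin N) (Fin N) ℂ) B)
    (Matrix.of fun i (_ : Fin 1) => col i)
    (Matrix.of fun (_ : Fin 1) j => row j)
    (0 : Matrix (Fin 1) (Fin 1) ℂ)).det

namespace ThirringAux

open Matrix Polynomial

variable {ι : Type*} [Fintype ι] [DecidableEq ι]

noncomputable def bdet {R : Type*} [CommRing R] (M : Matrix ι ι R) (u v : ι → R) : R :=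
  (Matrix.fromBlocks M (Matrix.of fun i (_ : Fin 1) => u i)
    (Matrix.of fun (_ : Fin 1) j => v j) (0 : Matrix (Fin 1) (Fin 1) R)).det

variable {R : Type*} [CommRing R]

lemma bdet_invariant (M : Matrix ι ι R) (a b c d : ι → R) (α β : R) :
    bdet (M + α • vecMulVec a b + β • vecMulVec c d) c b = bdet M c b := by
  have key : (fromBlocks (1 : Matrix ι ι R) (Matrix.of fun i (_ : Fin 1) => α * a i) 0 1) *
      ((fromBlocks M (Matrix.of fun i (_ : Fin 1) => c i)
        (Matrix.of fun (_ : Fin 1) j => b j) (0 : Matrix (Fin 1) (Fin 1) R)) *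
       (fromBlocks 1 0 (Matrix.of fun (_ : Fin 1) j => β * d j) 1)) =
      fromBlocks (M + α • vecMulVec a b + β • vecMulVec c d)
        (Matrix.of fun i (_ : Fin 1) => c i) (Matrix.of fun (_ : Fin 1) j => b j) 0 := by
    rw [fromBlocks_multiply, fromBlocks_multiply]
    ext i j
    rcases i with i | i <;> rcases j with j | j <;>
      (first
        | (simp [Matrix.mul_apply, Matrix.add_apply, vecMulVec_apply, Fin.sum_univ_one]; ring)
        | simp [Matrix.mul_apply, Matrix.add_apply, vecMulVec_apply, Fin.sum_univ_one])
  have hd : bdet (M + α • vecMulVec a b + β • vecMulVec c d) c b =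
      ((fromBlocks (1 : Matrix ι ι R) (Matrix.of fun i (_ : Fin 1) => α * a i) 0 1) *
      ((fromBlocks M (Matrix.of fun i (_ : Fin 1) => c i)
        (Matrix.of fun (_ : Fin 1) j => b j) (0 : Matrix (Fin 1) (Fin 1) R)) *
       (fromBlocks 1 0 (Matrix.of fun (_ : Fin 1) j => β * d j) 1))).det := by
    rw [key]; rfl
  rw [hd, det_mul, det_mul, det_fromBlocks_zero₂₁, det_fromBlocks_zero₁₂]
  simp [bdet]

lemma bdet_neg_row (M : Matrix ι ι R) (u v : ι → R) :
    bdet M u (fun j => -v j) = - bdet M u v := by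
  have key : (fromBlocks (1 : Matrix ι ι R) 0 0 (-1 : Matrix (Fin 1) (Fin 1) R)) *
      (fromBlocks M (Matrix.of fun i (_ : Fin 1) => u i)
        (Matrix.of fun (_ : Fin 1) j => v j) (0 : Matrix (Fin 1) (Fin 1) R)) =
      fromBlocks M (Matrix.of fun i (_ : Fin 1) => u i)
        (Matrix.of fun (_ : Fin 1) j => -v j) 0 := by
    rw [fromBlocks_multiply]
    ext i j
    rcases i with i | i <;> rcases j with j | j <;>
      simp [Matrix.mul_apply, Fin.sum_univ_one]
  have hd : bdet M u (fun j => -v j) =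
      ((fromBlocks (1 : Matrix ι ι R) 0 0 (-1 : Matrix (Fin 1) (Fin 1) R)) *
      (fromBlocks M (Matrix.of fun i (_ : Fin 1) => u i)
        (Matrix.of fun (_ : Fin 1) j => v j) (0 : Matrix (Fin 1) (Fin 1) R))).det := by
    rw [key]; rfl
  rw [hd, det_mul, det_fromBlocks_zero₁₂]
  have h1 : (-1 : Matrix (Fin 1) (Fin 1) R).det = -1 := by
    rw [det_fin_one]; simp
  rw [h1]
  simp [bdet]

lemma bdet_isUnit (M : Matrix ι ι ℂ) (h : IsUnit M.det) (u v : ι → ℂ) :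
    bdet M u v = -(M.det * (v ⬝ᵥ M⁻¹ *ᵥ u)) := by
  have := M.invertibleOfIsUnitDet h
  rw [bdet, det_fromBlocks₁₁, invOf_eq_nonsing_inv, det_fin_one]
  simp only [Matrix.sub_apply, Matrix.zero_apply, Matrix.mul_apply, Matrix.of_apply,
    dotProduct, Matrix.mulVec, zero_sub, neg_inj]
  have hs : (∑ x, (∑ y, v y * M⁻¹ y x) * u x) = ∑ x, v x * ∑ y, M⁻¹ x y * u y := by
    simp only [Finset.sum_mul, Finset.mul_sum]
    rw [Finset.sum_comm]
    exact Finset.sum_congr rfl fun i _ => Finset.sum_congr rfl fun j _ => by ring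
  rw [hs]
  ring

lemma det_add_rank2 (M : Matrix ι ι ℂ) (h : IsUnit M.det) (a b c d : ι → ℂ) (α β : ℂ) :
    (M + α • vecMulVec a b + β • vecMulVec c d).det
      = M.det * ((1 + α * (b ⬝ᵥ M⁻¹ *ᵥ a)) * (1 + β * (d ⬝ᵥ M⁻¹ *ᵥ c))
          - (α * (b ⬝ᵥ M⁻¹ *ᵥ c)) * (β * (d ⬝ᵥ M⁻¹ *ᵥ a))) := by
  set U : Matrix ι (Fin 2) ℂ := Matrix.of fun i k => if k = 0 then α * a i else β * c i with hU
  set V : Matrix (Fin 2) ι ℂ := Matrix.of fun k j => if k = 0 then b j else d j with hV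
  have hUV : α • vecMulVec a b + β • vecMulVec c d = U * V := by
    ext i j
    simp [Matrix.mul_apply, Fin.sum_univ_two, vecMulVec_apply, hU, hV]
    ring
  have hM : M + α • vecMulVec a b + β • vecMulVec c d = M * (1 + M⁻¹ * U * V) := by
    rw [add_assoc, hUV, Matrix.mul_add, Matrix.mul_one, ← Matrix.mul_assoc,
      ← Matrix.mul_assoc, Matrix.mul_nonsing_inv _ h, Matrix.one_mul]
  have hdot : ∀ (v w : ι → ℂ) (s : ℂ),
      (∑ j, v j * ∑ i, M⁻¹ j i * (s * w i)) = s * (v ⬝ᵥ M⁻¹ *ᵥ w) := by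
    intro v w s
    simp only [dotProduct, Matrix.mulVec, Finset.mul_sum]
    exact Finset.sum_congr rfl fun j _ => Finset.sum_congr rfl fun i _ => by ring
  rw [hM, det_mul, det_one_add_mul_comm (M⁻¹ * U) V]
  congr 1
  rw [det_fin_two]
  have e : ∀ (k l : Fin 2), ((1 + V * (M⁻¹ * U) : Matrix (Fin 2) (Fin 2) ℂ)) k l
      = (if k = l then 1 else 0) + ∑ j, V k j * ∑ i, M⁻¹ j i * U i l := by
    intro k l
    simp [Matrix.add_apply, Matrix.one_apply, Matrix.mul_apply]
  rw [e, e, e, e]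
  simp only [hU, hV, Matrix.of_apply]
  norm_num
  rw [hdot b a α, hdot d c β, hdot b c β, hdot d a α]
  ring

lemma key_unit (M : Matrix ι ι ℂ) (h : IsUnit M.det) (a b c d : ι → ℂ) (α β : ℂ) :
    (M + α • vecMulVec a b + β • vecMulVec c d).det * M.det
      - (M + α • vecMulVec a b).det * (M + β • vecMulVec c d).det
      = -(α * β) * bdet M c b * bdet M a d := by
  have hab : (M + α • vecMulVec a b).det = M.det * (1 + α * (b ⬝ᵥ M⁻¹ *ᵥ a)) := by
    have := det_add_rank2 M h a b c d α 0
    simpa using this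
  have hcd : (M + β • vecMulVec c d).det = M.det * (1 + β * (d ⬝ᵥ M⁻¹ *ᵥ c)) := by
    have := det_add_rank2 M h c d a b β 0
    simpa using this
  rw [det_add_rank2 M h a b c d α β, hab, hcd, bdet_isUnit M h c b, bdet_isUnit M h a d]
  ring

lemma charpoly_eval (M : Matrix ι ι ℂ) (t : ℂ) :
    ((-M).charpoly).eval t = (M + t • 1).det := by
  rw [Matrix.charpoly, ← Polynomial.coe_evalRingHom, RingHom.map_det]
  congr 1
  ext i j
  simp only [RingHom.mapMatrix_apply, Polynomial.coe_evalRingHom, Matrix.map_apply,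
    charmatrix_apply, Matrix.diagonal_apply, Matrix.neg_apply, eval_sub, eval_C,
    Matrix.add_apply, Matrix.smul_apply, Matrix.one_apply, smul_eq_mul,
    apply_ite (eval t), eval_X, eval_zero]
  split_ifs <;> ring

lemma infinite_invertible (M : Matrix ι ι ℂ) : {t : ℂ | IsUnit (M + t • 1).det}.Infinite := by
  have hq : (-M).charpoly ≠ 0 := (Matrix.charpoly_monic _).ne_zero
  have hfin : {t : ℂ | ((-M).charpoly).IsRoot t}.Finite := Polynomial.finite_setOf_isRoot hq
  refine hfin.infinite_compl.mono ?_
  intro t ht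
  simp only [Set.mem_compl_iff, Set.mem_setOf_eq, IsRoot] at ht ⊢
  rw [isUnit_iff_ne_zero, ← charpoly_eval M t]
  exact ht

lemma key (M : Matrix ι ι ℂ) (a b c d : ι → ℂ) (α β : ℂ) :
    (M + α • vecMulVec a b + β • vecMulVec c d).det * M.det
      - (M + α • vecMulVec a b).det * (M + β • vecMulVec c d).det
      = -(α * β) * bdet M c b * bdet M a d := by
  classical
  set MX : Matrix ι ι ℂ[X] := M.map C + (X : ℂ[X]) • 1 with hMX
  have hdet1 : ∀ (t : ℂ) (NX : Matrix ι ι ℂ[X]), eval t NX.det = (NX.map (eval t)).det := by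
    intro t NX
    rw [← Polynomial.coe_evalRingHom, RingHom.map_det, RingHom.mapMatrix_apply,
      Polynomial.coe_evalRingHom]
  have hmapM : ∀ t : ℂ, MX.map (eval t) = M + t • 1 := by
    intro t; ext i j
    simp only [hMX, Matrix.map_apply, Matrix.add_apply, Matrix.smul_apply, Matrix.one_apply,
      smul_eq_mul, mul_ite, mul_one, mul_zero, apply_ite (eval t), eval_add, eval_C, eval_X,
      eval_zero]
  have hmap2 : ∀ (t : ℂ) (s1 s2 : ℂ) (u1 v1 u2 v2 : ι → ℂ),
      ((MX + C s1 • vecMulVec (fun i => C (u1 i)) (fun i => C (v1 i))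
        + C s2 • vecMulVec (fun i => C (u2 i)) (fun i => C (v2 i))).map (eval t))
      = (M + t • 1) + s1 • vecMulVec u1 v1 + s2 • vecMulVec u2 v2 := by
    intro t s1 s2 u1 v1 u2 v2; ext i j
    simp only [hMX, Matrix.map_apply, Matrix.add_apply, Matrix.smul_apply, Matrix.one_apply,
      vecMulVec_apply, smul_eq_mul, mul_ite, mul_one, mul_zero, apply_ite (eval t), eval_add,
      eval_mul, eval_C, eval_X, eval_zero]
  have hmap1 : ∀ (t : ℂ) (s1 : ℂ) (u1 v1 : ι → ℂ),
      ((MX + C s1 • vecMulVec (fun i => C (u1 i)) (fun i => C (v1 i))).map (eval t))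
      = (M + t • 1) + s1 • vecMulVec u1 v1 := by
    intro t s1 u1 v1; ext i j
    simp only [hMX, Matrix.map_apply, Matrix.add_apply, Matrix.smul_apply, Matrix.one_apply,
      vecMulVec_apply, smul_eq_mul, mul_ite, mul_one, mul_zero, apply_ite (eval t), eval_add,
      eval_mul, eval_C, eval_X, eval_zero]
  have hbdet : ∀ (t : ℂ) (NX : Matrix ι ι ℂ[X]) (u v : ι → ℂ),
      eval t (bdet NX (fun i => C (u i)) (fun i => C (v i)))
        = bdet (NX.map (eval t)) u v := by
    intro t NX u v
    rw [bdet, bdet, ← Polynomial.coe_evalRingHom, RingHom.map_det, RingHom.mapMatrix_apply,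
      Polynomial.coe_evalRingHom]
    congr 1
    ext i j
    rcases i with i | i <;> rcases j with j | j <;>
      simp [Matrix.map_apply, fromBlocks_apply₁₁, fromBlocks_apply₁₂, fromBlocks_apply₂₁,
        fromBlocks_apply₂₂]
  set aP : ι → ℂ[X] := fun i => C (a i)
  set bP : ι → ℂ[X] := fun i => C (b i)
  set cP : ι → ℂ[X] := fun i => C (c i)
  set dP : ι → ℂ[X] := fun i => C (d i)
  set P1 : ℂ[X] := (MX + C α • vecMulVec aP bP + C β • vecMulVec cP dP).det * MX.det
      - (MX + C α • vecMulVec aP bP).det * (MX + C β • vecMulVec cP dP).det with hP1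
  set P2 : ℂ[X] := -(C α * C β) * bdet MX cP bP * bdet MX aP dP with hP2
  have hmaps1 : ∀ t : ℂ, eval t P1
      = ((M + t • 1) + α • vecMulVec a b + β • vecMulVec c d).det * (M + t • 1).det
        - ((M + t • 1) + α • vecMulVec a b).det * ((M + t • 1) + β • vecMulVec c d).det := by
    intro t
    rw [hP1]
    simp only [eval_sub, eval_mul]
    rw [hdet1, hdet1, hdet1, hdet1, hmap2, hmap1, hmap1, hmapM]
  have hmaps2 : ∀ t : ℂ, eval t P2
      = -(α * β) * bdet (M + t • 1) c b * bdet (M + t • 1) a d := by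
    intro t
    rw [hP2]
    simp only [eval_mul, eval_neg, eval_C]
    rw [hbdet, hbdet, hmapM]
  have hPP : P1 = P2 := by
    apply Polynomial.eq_of_infinite_eval_eq
    refine (infinite_invertible M).mono ?_
    intro t ht
    simp only [Set.mem_setOf_eq] at ht ⊢
    rw [hmaps1 t, hmaps2 t]
    exact key_unit (M + t • 1) ht a b c d α β
  have h0 := congrArg (eval 0) hPP
  rw [hmaps1 0, hmaps2 0] at h0
  simpa using h0

end ThirringAux

/-- Discrete Toda-type bilinear equation in the `k₂` direction for the Gram-type tau
functions of the two-component (semi-discrete) KP–Toda hierarchy. -/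
theorem discrete_toda_bilinear_k2 (N : ℕ) (hN : 1 ≤ N)
    (p pb q qb : Fin N → ℂ)
    (hp : ∀ i, p i ≠ 0) (hpb : ∀ i, pb i ≠ 0) (hq : ∀ i, q i ≠ 0) (hqb : ∀ i, qb i ≠ 0)
    (hppb : ∀ i j, p i + pb j ≠ 0) (hqqb : ∀ i j, q i + qb j ≠ 0)
    (μ ν : ℂ) (ξ0 ξb0 η0 ηb0 : Fin N → ℂ)
    (a₁ a₂ : ℝ) (ha₁ : a₁ ≠ 0) (ha₂ : a₂ ≠ 0)
    (h1 : ∀ i, 1 - (a₁ : ℂ) * p i ≠ 0) (h2 : ∀ j, 1 + (a₁ : ℂ) * pb j ≠ 0)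
    (h3 : ∀ i, 1 - (a₂ : ℂ) * q i ≠ 0) (h4 : ∀ j, 1 + (a₂ : ℂ) * qb j ≠ 0)
    (x y : ℝ)
    (ξ ξb η ηb : Fin N → ℂ)
    (hξ : ∀ i, ξ i = (x : ℂ) / p i + ξ0 i)
    (hξb : ∀ j, ξb j = (x : ℂ) / pb j + ξb0 j)
    (hη : ∀ i, η i = (y : ℂ) / q i + η0 i)
    (hηb : ∀ j, ηb j = (y : ℂ) / qb j + ηb0 j)
    (A : ℤ → ℤ → Matrix (Fin N) (Fin N) ℂ)
    (hA : ∀ n k₁ i j, A n k₁ i j =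
      (μ * pb j / (p i + pb j)) * (-(p i) / pb j) ^ n *
      ((1 - (a₁ : ℂ) * p i) / (1 + (a₁ : ℂ) * pb j)) ^ (-k₁) *
      Complex.exp (ξ i + ξb j))
    (At : ℤ → ℤ → Matrix (Fin N) (Fin N) ℂ)
    (hAt : ∀ n k₁ i j, At n k₁ i j =
      (-μ * p i / (p i + pb j)) * (-(p i) / pb j) ^ n *
      ((1 - (a₁ : ℂ) * p i) / (1 + (a₁ : ℂ) * pb j)) ^ (-k₁) *
      Complex.exp (ξ i + ξb j))
    (B : ℤ → ℤ → Matrix (Fin N) (Fin N) ℂ)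
    (hB : ∀ m k₂ i j, B m k₂ i j =
      (ν / (q i + qb j)) * (-(q i) / qb j) ^ m *
      ((1 - (a₂ : ℂ) * q i) / (1 + (a₂ : ℂ) * qb j)) ^ (-k₂) *
      Complex.exp (η i + ηb j))
    (Φ : ℤ → ℤ → Fin N → ℂ)
    (hΦ : ∀ n k₁ j, Φ n k₁ j =
      p j ^ n * (1 - (a₁ : ℂ) * p j) ^ (-k₁) * Complex.exp (ξ j))
    (Φb : ℤ → ℤ → Fin N → ℂ)
    (hΦb : ∀ n k₁ j, Φb n k₁ j =
      (-(pb j)) ^ (-n) * (1 + (a₁ : ℂ) * pb j) ^ k₁ * Complex.exp (ξb j))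
    (Ψ : ℤ → ℤ → Fin N → ℂ)
    (hΨ : ∀ m k₂ j, Ψ m k₂ j =
      q j ^ m * (1 - (a₂ : ℂ) * q j) ^ (-k₂) * Complex.exp (η j))
    (Ψb : ℤ → ℤ → Fin N → ℂ)
    (hΨb : ∀ m k₂ j, Ψb m k₂ j =
      (-(qb j)) ^ (-m) * (1 + (a₂ : ℂ) * qb j) ^ k₂ * Complex.exp (ηb j))
    (f : ℤ → ℤ → ℤ → ℤ → ℂ)
    (hf : ∀ m k₂ n k₁, f m k₂ n k₁ = blockDet (A n k₁) (B m k₂))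
    (g : ℤ → ℤ → ℤ → ℤ → ℂ)
    (hg : ∀ m k₂ n k₁, g m k₂ n k₁ = borderedDet (A n k₁) (B m k₂)
      (Sum.elim (Φ n k₁) (fun _ => 0))
      (Sum.elim (fun _ => 0) (fun j => -(Ψb m k₂ j))))
    (gb : ℤ → ℤ → ℤ → ℤ → ℂ)
    (hgb : ∀ m k₂ n k₁, gb m k₂ n k₁ = borderedDet (At n k₁) (B m k₂)
      (Sum.elim (fun _ => 0) (Ψ m k₂))
      (Sum.elim (fun j => -(Φb n k₁ j)) (fun _ => 0))) :
    ∀ n k₁ m k₂ : ℤ,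
      (1 / (a₂ : ℂ)) * (f m (k₂ + 1) (n + 1) k₁ * f m k₂ n k₁
        - f m k₂ (n + 1) k₁ * f m (k₂ + 1) n k₁)
      = μ * ν * g m k₂ n k₁ * gb m (k₂ + 1) n k₁ := by
  intro n k₁ m k₂
  -- entrywise shift relations
  have hE1 : ∀ i j, A (n + 1) k₁ i j = A n k₁ i j + (-μ) * (Φ n k₁ i * Φb n k₁ j) := by
    intro i j
    rw [hA, hA, hΦ, hΦb]
    have hbase : -(p i) / pb j ≠ 0 := div_ne_zero (neg_ne_zero.mpr (hp i)) (hpb j)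
    rw [zpow_add_one₀ hbase, Complex.exp_add]
    have hzn : (-(p i) / pb j) ^ n = p i ^ n * ((-(pb j)) ^ n)⁻¹ := by
      rw [show -(p i) / pb j = p i / (-(pb j)) by rw [div_neg, neg_div], div_zpow,
        div_eq_mul_inv]
    have hzk : ((1 - (a₁ : ℂ) * p i) / (1 + (a₁ : ℂ) * pb j)) ^ (-k₁)
        = (1 - (a₁ : ℂ) * p i) ^ (-k₁) * (((1 + (a₁ : ℂ) * pb j)) ^ (-k₁))⁻¹ := by
      rw [div_zpow, div_eq_mul_inv]
    have hinv : (-(pb j)) ^ (-n) = ((-(pb j)) ^ n)⁻¹ := by rw [_root_.zpow_neg]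
    have hinv2 : (1 + (a₁ : ℂ) * pb j) ^ k₁ = ((1 + (a₁ : ℂ) * pb j) ^ (-k₁))⁻¹ := by
      rw [_root_.zpow_neg, inv_inv]
    rw [hzn, hzk, hinv, hinv2]
    set P := p i ^ n with hP
    set Q := (-(pb j)) ^ n with hQ
    set Z1 := (1 - (a₁ : ℂ) * p i) ^ (-k₁) with hZ1
    set Z2 := (1 + (a₁ : ℂ) * pb j) ^ (-k₁) with hZ2
    have e1 : P ≠ 0 := zpow_ne_zero _ (hp i)
    have e2 : Q ≠ 0 := zpow_ne_zero _ (neg_ne_zero.mpr (hpb j))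
    have e3 : Z1 ≠ 0 := zpow_ne_zero _ (h1 i)
    have e4 : Z2 ≠ 0 := zpow_ne_zero _ (h2 j)
    have e5 := hppb i j
    have e6 := hpb j
    clear_value P Q Z1 Z2
    field_simp
    ring
  have hE1t : ∀ i j, At n k₁ i j = A n k₁ i j + (-μ) * (Φ n k₁ i * Φb n k₁ j) := by
    intro i j
    rw [hAt, hA, hΦ, hΦb]
    have hzn : (-(p i) / pb j) ^ n = p i ^ n * ((-(pb j)) ^ n)⁻¹ := by
      rw [show -(p i) / pb j = p i / (-(pb j)) by rw [div_neg, neg_div], div_zpow,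
        div_eq_mul_inv]
    have hzk : ((1 - (a₁ : ℂ) * p i) / (1 + (a₁ : ℂ) * pb j)) ^ (-k₁)
        = (1 - (a₁ : ℂ) * p i) ^ (-k₁) * (((1 + (a₁ : ℂ) * pb j)) ^ (-k₁))⁻¹ := by
      rw [div_zpow, div_eq_mul_inv]
    have hinv : (-(pb j)) ^ (-n) = ((-(pb j)) ^ n)⁻¹ := by rw [_root_.zpow_neg]
    have hinv2 : (1 + (a₁ : ℂ) * pb j) ^ k₁ = ((1 + (a₁ : ℂ) * pb j) ^ (-k₁))⁻¹ := by
      rw [_root_.zpow_neg, inv_inv]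
    rw [Complex.exp_add, hzn, hzk, hinv, hinv2]
    set P := p i ^ n with hP
    set Q := (-(pb j)) ^ n with hQ
    set Z1 := (1 - (a₁ : ℂ) * p i) ^ (-k₁) with hZ1
    set Z2 := (1 + (a₁ : ℂ) * pb j) ^ (-k₁) with hZ2
    have e1 : P ≠ 0 := zpow_ne_zero _ (hp i)
    have e2 : Q ≠ 0 := zpow_ne_zero _ (neg_ne_zero.mpr (hpb j))
    have e3 : Z1 ≠ 0 := zpow_ne_zero _ (h1 i)
    have e4 : Z2 ≠ 0 := zpow_ne_zero _ (h2 j)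
    have e5 := hppb i j
    have e6 := hpb j
    clear_value P Q Z1 Z2
    field_simp
    ring
  have hE2 : ∀ i j, B m (k₂ + 1) i j
      = B m k₂ i j + ((a₂ : ℂ) * ν) * (Ψ m (k₂ + 1) i * Ψb m k₂ j) := by
    intro i j
    rw [hB, hB, hΨ, hΨb]
    have hW : (1 - (a₂ : ℂ) * q i) ≠ 0 := h3 i
    have hV : (1 + (a₂ : ℂ) * qb j) ≠ 0 := h4 j
    have hfrac : (1 - (a₂ : ℂ) * q i) / (1 + (a₂ : ℂ) * qb j) ≠ 0 := div_ne_zero hW hV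
    have hsplit : ∀ (z : ℂ), z ≠ 0 → z ^ (-(k₂ + 1)) = z ^ (-k₂) * z⁻¹ := by
      intro z hz
      rw [show -(k₂ + 1) = -k₂ + (-1) by ring, zpow_add₀ hz, _root_.zpow_neg_one]
    rw [hsplit _ hfrac, hsplit _ hW, Complex.exp_add]
    have hzm : (-(q i) / qb j) ^ m = q i ^ m * ((-(qb j)) ^ m)⁻¹ := by
      rw [show -(q i) / qb j = q i / (-(qb j)) by rw [div_neg, neg_div], div_zpow,
        div_eq_mul_inv]
    have hzk : ((1 - (a₂ : ℂ) * q i) / (1 + (a₂ : ℂ) * qb j)) ^ (-k₂)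
        = (1 - (a₂ : ℂ) * q i) ^ (-k₂) * (((1 + (a₂ : ℂ) * qb j)) ^ (-k₂))⁻¹ := by
      rw [div_zpow, div_eq_mul_inv]
    have hinv : (-(qb j)) ^ (-m) = ((-(qb j)) ^ m)⁻¹ := by rw [_root_.zpow_neg]
    have hinv2 : (1 + (a₂ : ℂ) * qb j) ^ k₂ = ((1 + (a₂ : ℂ) * qb j) ^ (-k₂))⁻¹ := by
      rw [_root_.zpow_neg, inv_inv]
    rw [hzm, hzk, hinv, hinv2]
    set P := q i ^ m with hP
    set Q := (-(qb j)) ^ m with hQ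
    set Z1 := (1 - (a₂ : ℂ) * q i) ^ (-k₂) with hZ1
    set Z2 := (1 + (a₂ : ℂ) * qb j) ^ (-k₂) with hZ2
    have e1 : P ≠ 0 := zpow_ne_zero _ (hq i)
    have e2 : Q ≠ 0 := zpow_ne_zero _ (neg_ne_zero.mpr (hqb j))
    have e3 : Z1 ≠ 0 := zpow_ne_zero _ (h3 i)
    have e4 : Z2 ≠ 0 := zpow_ne_zero _ (h4 j)
    have e5 := hqqb i j
    have e6 := hqb j
    clear_value P Q Z1 Z2
    field_simp
    linear_combination ν * mul_inv_cancel₀ hW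
  -- vectors
  set aa : (Fin N ⊕ Fin N) → ℂ := Sum.elim (Φ n k₁) (fun _ => 0) with haa
  set bb : (Fin N ⊕ Fin N) → ℂ := Sum.elim (Φb n k₁) (fun _ => 0) with hbb
  set cc : (Fin N ⊕ Fin N) → ℂ := Sum.elim (fun _ => 0) (Ψ m (k₂ + 1)) with hcc
  set dd : (Fin N ⊕ Fin N) → ℂ := Sum.elim (fun _ => 0) (Ψb m k₂) with hdd
  set M0 : Matrix (Fin N ⊕ Fin N) (Fin N ⊕ Fin N) ℂ :=
    fromBlocks (A n k₁) 1 (-1) (B m k₂) with hM0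
  -- matrix decompositions
  have hM1 : fromBlocks (A (n + 1) k₁) 1 (-1) (B m k₂) = M0 + (-μ) • vecMulVec aa bb := by
    ext i j
    rcases i with i | i <;> rcases j with j | j <;>
      simp only [hM0, haa, hbb, Matrix.add_apply, Matrix.smul_apply, fromBlocks_apply₁₁,
        fromBlocks_apply₁₂, fromBlocks_apply₂₁, fromBlocks_apply₂₂, vecMulVec_apply,
        Sum.elim_inl, Sum.elim_inr, smul_eq_mul]
    · rw [hE1 i j]
    · simp
    · simp
    · simp
  have hM2 : fromBlocks (A n k₁) 1 (-1) (B m (k₂ + 1))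
      = M0 + ((a₂ : ℂ) * ν) • vecMulVec cc dd := by
    ext i j
    rcases i with i | i <;> rcases j with j | j <;>
      simp only [hM0, hcc, hdd, Matrix.add_apply, Matrix.smul_apply, fromBlocks_apply₁₁,
        fromBlocks_apply₁₂, fromBlocks_apply₂₁, fromBlocks_apply₂₂, vecMulVec_apply,
        Sum.elim_inl, Sum.elim_inr, smul_eq_mul]
    · simp
    · simp
    · simp
    · rw [hE2 i j]
  have hM3 : fromBlocks (A (n + 1) k₁) 1 (-1) (B m (k₂ + 1))
      = M0 + (-μ) • vecMulVec aa bb + ((a₂ : ℂ) * ν) • vecMulVec cc dd := by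
    ext i j
    rcases i with i | i <;> rcases j with j | j <;>
      simp only [hM0, haa, hbb, hcc, hdd, Matrix.add_apply, Matrix.smul_apply,
        fromBlocks_apply₁₁, fromBlocks_apply₁₂, fromBlocks_apply₂₁, fromBlocks_apply₂₂,
        vecMulVec_apply, Sum.elim_inl, Sum.elim_inr, smul_eq_mul]
    · rw [hE1 i j]; ring
    · simp
    · simp
    · rw [hE2 i j]; ring
  have hM4 : fromBlocks (At n k₁) 1 (-1) (B m (k₂ + 1))
      = M0 + (-μ) • vecMulVec aa bb + ((a₂ : ℂ) * ν) • vecMulVec cc dd := by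
    ext i j
    rcases i with i | i <;> rcases j with j | j <;>
      simp only [hM0, haa, hbb, hcc, hdd, Matrix.add_apply, Matrix.smul_apply,
        fromBlocks_apply₁₁, fromBlocks_apply₁₂, fromBlocks_apply₂₁, fromBlocks_apply₂₂,
        vecMulVec_apply, Sum.elim_inl, Sum.elim_inr, smul_eq_mul]
    · rw [hE1t i j]; ring
    · simp
    · simp
    · rw [hE2 i j]; ring
  -- rewrite f, g, gb
  have hfa : f m (k₂ + 1) (n + 1) k₁
      = (M0 + (-μ) • vecMulVec aa bb + ((a₂ : ℂ) * ν) • vecMulVec cc dd).det := by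
    rw [hf]; show (fromBlocks (A (n + 1) k₁) 1 (-1) (B m (k₂ + 1))).det = _; rw [hM3]
  have hfb : f m k₂ n k₁ = M0.det := by
    rw [hf]; rfl
  have hfc : f m k₂ (n + 1) k₁ = (M0 + (-μ) • vecMulVec aa bb).det := by
    rw [hf]; show (fromBlocks (A (n + 1) k₁) 1 (-1) (B m k₂)).det = _; rw [hM1]
  have hfd : f m (k₂ + 1) n k₁ = (M0 + ((a₂ : ℂ) * ν) • vecMulVec cc dd).det := by
    rw [hf]; show (fromBlocks (A n k₁) 1 (-1) (B m (k₂ + 1))).det = _; rw [hM2]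
  have hrow1 : (Sum.elim (fun _ => (0 : ℂ)) (fun j => -(Ψb m k₂ j))) = fun x => -(dd x) := by
    funext z; rcases z with z | z <;> simp [hdd]
  have hrow2 : (Sum.elim (fun j => -(Φb n k₁ j)) (fun _ => (0 : ℂ))) = fun x => -(bb x) := by
    funext z; rcases z with z | z <;> simp [hbb]
  have hge : g m k₂ n k₁ = -(ThirringAux.bdet M0 aa dd) := by
    rw [hg]
    show ThirringAux.bdet M0 aa (Sum.elim (fun _ => (0 : ℂ)) (fun j => -(Ψb m k₂ j))) = _
    rw [hrow1, ThirringAux.bdet_neg_row]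
  have hgbe : gb m (k₂ + 1) n k₁ = -(ThirringAux.bdet M0 cc bb) := by
    rw [hgb]
    show ThirringAux.bdet (fromBlocks (At n k₁) 1 (-1) (B m (k₂ + 1))) cc
      (Sum.elim (fun j => -(Φb n k₁ j)) (fun _ => (0 : ℂ))) = _
    rw [hrow2, ThirringAux.bdet_neg_row, hM4, ThirringAux.bdet_invariant]
  rw [hfa, hfb, hfc, hfd, hge, hgbe,
    ThirringAux.key M0 aa bb cc dd (-μ) ((a₂ : ℂ) * ν)]
  have ha₂C : (a₂ : ℂ) ≠ 0 := Complex.ofReal_ne_zero.mpr ha₂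
  field_simp
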